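/- TV distance between Poisson mixtures via moment matching: if X, X′ are random variables supported on [0, b] with E[X^j] = E[(X′)^j] for j = 1,…,L and L > 2eb, then TV( E_X[Poi(X)], E_{X′}[Poi(X′)] ) ≤ (2eb/L)^L. -/

import Mathlib

open MeasureTheory

/-! ### Auxiliary lemmas -/

lemma exp_series_pt (x : ℝ) (j : ℕ) :
    Real.exp (-x) * x ^ j / (j.factorial : ℝ)
      = ∑' k : ℕ, (-1 : ℝ) ^ k * x ^ (j + k) / ((j.factorial : ℝ) * (k.factorial : ℝ)) := by
  have h : Real.exp (-x) = ∑' k : ℕ, (-x) ^ k / (k.factorial : ℝ) := by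
    rw [Real.exp_eq_exp_ℝ, NormedSpace.exp_eq_tsum_div]
  have h2 : ∀ k : ℕ, (-x) ^ k / (k.factorial : ℝ) * (x ^ j / (j.factorial : ℝ))
      = (-1 : ℝ) ^ k * x ^ (j + k) / ((j.factorial : ℝ) * (k.factorial : ℝ)) := by
    intro k
    rw [neg_pow, pow_add]
    ring
  calc Real.exp (-x) * x ^ j / (j.factorial : ℝ)
      = (∑' k : ℕ, (-x) ^ k / (k.factorial : ℝ)) * (x ^ j / (j.factorial : ℝ)) := by
        rw [h]; ring
    _ = ∑' k : ℕ, (-x) ^ k / (k.factorial : ℝ) * (x ^ j / (j.factorial : ℝ)) := by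
        rw [tsum_mul_right]
    _ = _ := by exact tsum_congr h2

lemma tsum_exp_pos (b : ℝ) : ∑' k : ℕ, b ^ k / (k.factorial : ℝ) = Real.exp b := by
  rw [Real.exp_eq_exp_ℝ, NormedSpace.exp_eq_tsum_div]

lemma integrable_of_ae_bound {ν : Measure ℝ} [IsFiniteMeasure ν] {f : ℝ → ℝ} {C : ℝ}
    (hm : AEStronglyMeasurable f ν) (h : ∀ᵐ x ∂ν, |f x| ≤ C) : Integrable f ν :=
  ⟨hm, HasFiniteIntegral.of_bounded (by simpa [Real.norm_eq_abs] using h)⟩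

lemma summable_bpow (b : ℝ) (j : ℕ) :
    Summable (fun k : ℕ => b ^ (j + k) / ((j.factorial : ℝ) * (k.factorial : ℝ))) := by
  have h1 : Summable (fun k : ℕ => b ^ k / (k.factorial : ℝ)) :=
    Real.summable_pow_div_factorial b
  have := (h1.mul_left (b ^ j / (j.factorial : ℝ)))
  apply this.congr
  intro k
  rw [pow_add]
  field_simp

lemma moment_bound {b : ℝ} (hb : 0 < b) (ν : Measure ℝ) [IsProbabilityMeasure ν]
    (hν : ν (Set.Icc (0 : ℝ) b)ᶜ = 0) (n : ℕ) :
    |∫ x, x ^ n ∂ν| ≤ b ^ n := by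
  have hae : ∀ᵐ x ∂ν, x ∈ Set.Icc (0 : ℝ) b := (MeasureTheory.mem_ae_iff).mpr hν
  have h := MeasureTheory.norm_integral_le_of_norm_le_const (μ := ν)
    (f := fun x : ℝ => x ^ n) (C := b ^ n) (by
      filter_upwards [hae] with x hx
      rw [Real.norm_eq_abs, abs_of_nonneg (pow_nonneg hx.1 _)]
      exact pow_le_pow_left₀ hx.1 hx.2 _)
  simpa [Real.norm_eq_abs] using h

lemma key_expansion {b : ℝ} (hb : 0 < b) (ν : Measure ℝ) [IsProbabilityMeasure ν]
    (hν : ν (Set.Icc (0 : ℝ) b)ᶜ = 0) (j : ℕ) :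
    (∫ x, Real.exp (-x) * x ^ j / (j.factorial : ℝ) ∂ν)
      = ∑' k : ℕ, (-1 : ℝ) ^ k * (∫ x, x ^ (j + k) ∂ν)
          / ((j.factorial : ℝ) * (k.factorial : ℝ)) := by
  have hae : ∀ᵐ x ∂ν, x ∈ Set.Icc (0 : ℝ) b := (MeasureTheory.mem_ae_iff).mpr hν
  set F : ℕ → ℝ → ℝ := fun k x =>
    (-1 : ℝ) ^ k * x ^ (j + k) / ((j.factorial : ℝ) * (k.factorial : ℝ)) with hF
  have hC : ∀ k : ℕ, ∀ᵐ x ∂ν, |F k x| ≤ b ^ (j + k) / ((j.factorial : ℝ) * (k.factorial : ℝ)) := by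
    intro k
    filter_upwards [hae] with x hx
    have hx0 : 0 ≤ x := hx.1
    have hden : (0 : ℝ) < (j.factorial : ℝ) * (k.factorial : ℝ) := by positivity
    have habs : |F k x| = x ^ (j + k) / ((j.factorial : ℝ) * (k.factorial : ℝ)) := by
      rw [hF]
      simp only []
      rw [abs_div, abs_mul, abs_pow, abs_pow, abs_neg, abs_one, one_pow, one_mul,
        abs_of_nonneg hx0, abs_of_pos hden]
    rw [habs]
    exact div_le_div_of_nonneg_right (pow_le_pow_left₀ hx0 hx.2 _) hden.le
  have hmeas : ∀ k : ℕ, AEStronglyMeasurable (F k) ν := by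
    intro k
    exact ((continuous_const.mul (continuous_pow (j + k))).div_const _).aestronglyMeasurable
  have hInt : ∀ k : ℕ, Integrable (F k) ν := fun k =>
    integrable_of_ae_bound (hmeas k) (hC k)
  have hIntNorm : ∀ k : ℕ, (∫ x, ‖F k x‖ ∂ν)
      ≤ b ^ (j + k) / ((j.factorial : ℝ) * (k.factorial : ℝ)) := by
    intro k
    have := integral_mono_ae (hInt k).norm (integrable_const
      (b ^ (j + k) / ((j.factorial : ℝ) * (k.factorial : ℝ))))
      (by filter_upwards [hC k] with x hx using by simpa [Real.norm_eq_abs] using hx)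
    simpa using this
  have hSumm : Summable (fun k : ℕ => ∫ x, ‖F k x‖ ∂ν) := by
    apply Summable.of_nonneg_of_le (fun k => integral_nonneg fun x => norm_nonneg _)
      (fun k => hIntNorm k) (summable_bpow b j)
  have hswap := MeasureTheory.integral_tsum_of_summable_integral_norm hInt hSumm
  have hptwise : (∫ x, Real.exp (-x) * x ^ j / (j.factorial : ℝ) ∂ν)
      = ∫ x, ∑' k : ℕ, F k x ∂ν := by
    congr 1
    funext x
    exact exp_series_pt x j
  rw [hptwise, ← hswap]
  apply tsum_congr
  intro k
  rw [hF]
  simp only []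
  simp_rw [mul_div_assoc]
  rw [integral_const_mul, integral_div]

lemma summable_term {b : ℝ} (hb : 0 < b) (ν : Measure ℝ) [IsProbabilityMeasure ν]
    (hν : ν (Set.Icc (0 : ℝ) b)ᶜ = 0) (j : ℕ) :
    Summable (fun k : ℕ => (-1 : ℝ) ^ k * (∫ x, x ^ (j + k) ∂ν)
        / ((j.factorial : ℝ) * (k.factorial : ℝ))) := by
  apply Summable.of_norm_bounded (summable_bpow b j) _
  intro k
  have hden : (0 : ℝ) < (j.factorial : ℝ) * (k.factorial : ℝ) := by positivity
  rw [Real.norm_eq_abs, abs_div, abs_mul, abs_pow, abs_neg, abs_one, one_pow, one_mul,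
    abs_of_pos hden]
  exact div_le_div_of_nonneg_right (moment_bound hb ν hν (j + k)) hden.le

def sigmaEquiv : (Σ n : ℕ, Fin (n + 1)) ≃ ℕ × ℕ where
  toFun s := (s.2.1, s.1 - s.2.1)
  invFun p := ⟨p.1 + p.2, ⟨p.1, by omega⟩⟩
  left_inv := by
    rintro ⟨n, i, hi⟩
    have h : i + (n - i) = n := by omega
    simp only
    exact Sigma.ext h ((Fin.heq_ext_iff (show i + (n - i) + 1 = n + 1 by omega)).mpr rfl)
  right_inv := by
    rintro ⟨j, k⟩
    simp

lemma tsum_prod_regroup (E : ℕ × ℕ → ℝ) (hE : Summable E) :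
    ∑' p : ℕ × ℕ, E p = ∑' n : ℕ, ∑ i ∈ Finset.range (n + 1), E (i, n - i) := by
  rw [← sigmaEquiv.tsum_eq E]
  have hs : Summable (fun c : (Σ n : ℕ, Fin (n + 1)) => E (sigmaEquiv c)) :=
    sigmaEquiv.summable_iff.mpr hE
  rw [Summable.tsum_sigma hs]
  apply tsum_congr
  intro n
  rw [tsum_fintype]
  exact Fin.sum_univ_eq_sum_range (fun i => E (i, n - i)) (n + 1)

lemma sum_inv_factorials (n : ℕ) :
    ∑ i ∈ Finset.range (n + 1), (1 : ℝ) / ((i.factorial : ℝ) * ((n - i).factorial : ℝ))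
      = 2 ^ n / (n.factorial : ℝ) := by
  have h : ∀ i ∈ Finset.range (n + 1),
      (1 : ℝ) / ((i.factorial : ℝ) * ((n - i).factorial : ℝ))
        = (n.choose i : ℝ) / (n.factorial : ℝ) := by
    intro i hi
    have hin : i ≤ n := by simpa [Nat.lt_succ_iff] using Finset.mem_range.mp hi
    have := Nat.choose_mul_factorial_mul_factorial hin
    have hcast : (n.choose i : ℝ) * (i.factorial : ℝ) * ((n - i).factorial : ℝ)
        = (n.factorial : ℝ) := by exact_mod_cast congrArg (Nat.cast : ℕ → ℝ) this
    have h1 : (0:ℝ) < (i.factorial : ℝ) := by positivity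
    have h2 : (0:ℝ) < ((n-i).factorial : ℝ) := by positivity
    have h3 : (0:ℝ) < (n.factorial : ℝ) := by positivity
    field_simp
    linarith [hcast]
  rw [Finset.sum_congr rfl h, ← Finset.sum_div]
  congr 1
  rw [← Nat.cast_sum, Nat.sum_range_choose]
  norm_num

lemma pow_div_factorial_tail (a : ℝ) (ha : 0 ≤ a) (K : ℕ) (hK : 1 ≤ K) (m : ℕ) :
    a ^ (K + m) / ((K + m).factorial : ℝ)
      ≤ a ^ K / (K.factorial : ℝ) * (a / K) ^ m := by
  induction m with
  | zero => simp
  | succ m ih =>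
    have hKm : (K + (m + 1)).factorial = (K + m).factorial * (K + m + 1) := by
      rw [show K + (m + 1) = (K + m) + 1 by ring, Nat.factorial_succ]
      ring
    have h1 : a ^ (K + (m + 1)) / ((K + (m + 1)).factorial : ℝ)
        = a ^ (K + m) / ((K + m).factorial : ℝ) * (a / (K + m + 1)) := by
      rw [hKm, pow_add, pow_add]
      push_cast
      field_simp
      ring
    rw [h1]
    have h2 : a / (K + m + 1 : ℝ) ≤ a / K := by
      apply div_le_div_of_nonneg_left ha
      · exact_mod_cast Nat.lt_of_lt_of_le Nat.zero_lt_one (by exact_mod_cast hK)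
      · push_cast; linarith [hK]
    calc a ^ (K + m) / ((K + m).factorial : ℝ) * (a / (K + m + 1))
        ≤ (a ^ K / (K.factorial : ℝ) * (a / K) ^ m) * (a / K) := by
          apply mul_le_mul ih h2 (by positivity) (by positivity)
      _ = a ^ K / (K.factorial : ℝ) * (a / K) ^ (m + 1) := by ring

lemma succ_pow_le (n : ℕ) : ((n : ℝ) + 1) ^ n ≤ (n : ℝ) ^ n * Real.exp 1 := by
  rcases Nat.eq_zero_or_pos n with h | h
  · subst h; simpa using Real.one_le_exp (by norm_num)
  · have hn : (0 : ℝ) < n := by exact_mod_cast h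
    have h1 : ((n : ℝ) + 1) = (n : ℝ) * (1 + 1 / n) := by field_simp
    have h2 : (1 + 1 / (n : ℝ)) ^ n ≤ Real.exp 1 := by
      have := Real.add_one_le_exp (1 / (n : ℝ))
      calc (1 + 1 / (n : ℝ)) ^ n ≤ (Real.exp (1 / n)) ^ n := by
            apply pow_le_pow_left₀ (by positivity) (by linarith) n
        _ = Real.exp 1 := by
            rw [← Real.exp_nat_mul]
            congr 1
            field_simp
    calc ((n : ℝ) + 1) ^ n = (n : ℝ) ^ n * (1 + 1 / n) ^ n := by
          rw [h1, mul_pow]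
      _ ≤ (n : ℝ) ^ n * Real.exp 1 := by
          apply mul_le_mul_of_nonneg_left h2 (by positivity)

lemma pow_self_le_factorial_mul_exp (n : ℕ) :
    (n : ℝ) ^ n ≤ (n.factorial : ℝ) * Real.exp 1 ^ n := by
  induction n with
  | zero => simp
  | succ n ih =>
    have h1 : ((n : ℝ) + 1) ^ (n + 1) = ((n : ℝ) + 1) * ((n : ℝ) + 1) ^ n := by ring
    calc ((n + 1 : ℕ) : ℝ) ^ (n + 1) = ((n : ℝ) + 1) * ((n : ℝ) + 1) ^ n := by
          push_cast; rw [h1]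
      _ ≤ ((n : ℝ) + 1) * ((n : ℝ) ^ n * Real.exp 1) := by
          apply mul_le_mul_of_nonneg_left (succ_pow_le n) (by positivity)
      _ ≤ ((n : ℝ) + 1) * ((n.factorial : ℝ) * Real.exp 1 ^ n * Real.exp 1) := by
          apply mul_le_mul_of_nonneg_left _ (by positivity)
          exact mul_le_mul_of_nonneg_right ih (Real.exp_pos 1).le
      _ = ((n + 1).factorial : ℝ) * Real.exp 1 ^ (n + 1) := by
          rw [Nat.factorial_succ]
          push_cast
          ring

lemma two_mul_pow_le (L : ℕ) (hL : 1 ≤ L) :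
    2 * (L : ℝ) ^ L ≤ ((L : ℝ) + 1) ^ L := by
  have hn : (0 : ℝ) < L := by exact_mod_cast hL
  have h2 : (2 : ℝ) ≤ (1 + 1 / (L : ℝ)) ^ L := by
    have h0 : (0 : ℝ) ≤ 1 / (L : ℝ) := by positivity
    have := one_add_mul_le_pow (a := 1 / (L : ℝ)) (by linarith) L
    calc (2 : ℝ) = 1 + (L : ℝ) * (1 / L) := by
          rw [mul_one_div, div_self hn.ne']; norm_num
      _ ≤ (1 + 1 / (L : ℝ)) ^ L := this
  calc 2 * (L : ℝ) ^ L ≤ (1 + 1 / (L : ℝ)) ^ L * (L : ℝ) ^ L := by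
        apply mul_le_mul_of_nonneg_right h2 (by positivity)
    _ = ((L : ℝ) + 1) ^ L := by
        rw [← mul_pow]
        congr 1
        field_simp

lemma arith_final (b : ℝ) (hb : 0 < b) (L : ℕ)
    (hL : 2 * Real.exp 1 * b < (L : ℝ)) :
    (2 * b) ^ (L + 1) / (((L + 1).factorial : ℝ)) * (1 - 2 * b / ((L : ℝ) + 1))⁻¹
      ≤ (2 * Real.exp 1 * b / (L : ℝ)) ^ L := by
  set e := Real.exp 1 with he
  set a := 2 * b with ha
  have hea : (0 : ℝ) < e := Real.exp_pos 1
  have he2 : (2 : ℝ) ≤ e := by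
    have := Real.add_one_le_exp 1
    linarith
  have hae : e * a < (L : ℝ) := by
    calc e * a = 2 * e * b := by rw [ha]; ring
      _ < (L : ℝ) := hL
  have hapos : (0 : ℝ) < a := by rw [ha]; linarith
  have hLpos : (0 : ℝ) < (L : ℝ) := lt_trans (by positivity) hae
  have hL1 : 1 ≤ L := by exact_mod_cast Nat.one_le_iff_ne_zero.mpr (by
    intro h; rw [h] at hLpos; simp at hLpos)
  have haL2 : a ≤ (L : ℝ) / 2 := by nlinarith
  have hden : (0 : ℝ) < (L : ℝ) + 1 - a := by linarith
  have h1q : 1 - a / ((L : ℝ) + 1) = ((L : ℝ) + 1 - a) / ((L : ℝ) + 1) := by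
    field_simp
  have hLHS : a ^ (L + 1) / (((L + 1).factorial : ℝ)) * (1 - a / ((L : ℝ) + 1))⁻¹
      = a ^ (L + 1) * ((L : ℝ) + 1) / ((((L + 1).factorial : ℝ)) * ((L : ℝ) + 1 - a)) := by
    rw [h1q]
    have hf : (0 : ℝ) < (((L + 1).factorial : ℝ)) := by positivity
    rw [inv_div]
    field_simp
  have hRHS : (e * a / (L : ℝ)) ^ L = e ^ L * a ^ L / (L : ℝ) ^ L := by
    rw [div_pow, mul_pow]
  have hgoal : (2 * Real.exp 1 * b / (L : ℝ)) ^ L = e ^ L * a ^ L / (L : ℝ) ^ L := by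
    rw [← hRHS]
    congr 1
    rw [ha, he]; ring
  rw [hLHS, hgoal]
  rw [div_le_div_iff₀ (by positivity) (by positivity)]
  have hfac : ((L : ℝ) + 1) ^ (L + 1) ≤ (((L + 1).factorial : ℝ)) * e ^ (L + 1) := by
    have := pow_self_le_factorial_mul_exp (L + 1)
    push_cast at this ⊢
    convert this using 2
  have hstar : a * (L : ℝ) ^ L * e ≤ ((L : ℝ) + 1) ^ L * ((L : ℝ) + 1 - a) := by
    calc a * (L : ℝ) ^ L * e = (e * a) * (L : ℝ) ^ L := by ring
      _ ≤ (L : ℝ) * (L : ℝ) ^ L := mul_le_mul_of_nonneg_right hae.le (by positivity)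
      _ = (2 * (L : ℝ) ^ L) * ((L : ℝ) / 2) := by ring
      _ ≤ ((L : ℝ) + 1) ^ L * ((L : ℝ) + 1 - a) := by
          apply mul_le_mul (two_mul_pow_le L hL1) (by linarith) (by positivity) (by positivity)
  have h5 : ((L : ℝ) + 1) ^ (L + 1) * ((L : ℝ) + 1 - a)
      ≤ (((L + 1).factorial : ℝ)) * e ^ (L + 1) * ((L : ℝ) + 1 - a) :=
    mul_le_mul_of_nonneg_right hfac hden.le
  apply le_of_mul_le_mul_right _ hea
  calc a ^ (L + 1) * ((L : ℝ) + 1) * (L : ℝ) ^ L * e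
      = a ^ L * (((L : ℝ) + 1) * (a * (L : ℝ) ^ L * e)) := by ring
    _ ≤ a ^ L * (((L : ℝ) + 1) * (((L : ℝ) + 1) ^ L * ((L : ℝ) + 1 - a))) := by
        apply mul_le_mul_of_nonneg_left _ (by positivity)
        exact mul_le_mul_of_nonneg_left hstar (by positivity)
    _ = a ^ L * (((L : ℝ) + 1) ^ (L + 1) * ((L : ℝ) + 1 - a)) := by ring
    _ ≤ a ^ L * ((((L + 1).factorial : ℝ)) * e ^ (L + 1) * ((L : ℝ) + 1 - a)) := by
        apply mul_le_mul_of_nonneg_left h5 (by positivity)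
    _ = e ^ L * a ^ L * ((((L + 1).factorial : ℝ)) * ((L : ℝ) + 1 - a)) * e := by ring

set_option maxHeartbeats 2000000 in
/-- TV distance between Poisson mixtures via moment matching: if the laws μ, μ' are
supported on [0,b] with matching moments up to order L > 2eb, then the total
variation distance between the mixtures E[Poi(X)] and E[Poi(X')] is at most
(2eb/L)^L. -/
theorem tv_poisson_mixtures
    (b : ℝ) (hb : 0 < b) (L : ℕ)
    (hL : 2 * Real.exp 1 * b < (L : ℝ))
    (μ μ' : Measure ℝ) [IsProbabilityMeasure μ] [IsProbabilityMeasure μ']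
    (hμ : μ (Set.Icc (0 : ℝ) b)ᶜ = 0) (hμ' : μ' (Set.Icc (0 : ℝ) b)ᶜ = 0)
    (hmom : ∀ j : ℕ, 1 ≤ j → j ≤ L → (∫ x, x ^ j ∂μ) = ∫ x, x ^ j ∂μ') :
    (1 / 2) * ∑' j : ℕ,
        |(∫ x, Real.exp (-x) * x ^ j / (j.factorial : ℝ) ∂μ)
          - ∫ x, Real.exp (-x) * x ^ j / (j.factorial : ℝ) ∂μ'|
      ≤ (2 * Real.exp 1 * b / (L : ℝ)) ^ L := by
  have hexp2 : (2 : ℝ) ≤ Real.exp 1 := by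
    have := Real.add_one_le_exp 1; linarith
  have hLpos : (0 : ℝ) < (L : ℝ) := lt_trans (by positivity) hL
  set d : ℕ → ℝ := fun n => (∫ x, x ^ n ∂μ) - ∫ x, x ^ n ∂μ' with hd
  have hd0 : ∀ n ≤ L, d n = 0 := by
    intro n hn
    rcases Nat.eq_zero_or_pos n with h | h
    · subst h; simp [hd]
    · exact sub_eq_zero.mpr (hmom n h hn)
  have hdabs : ∀ n, |d n| ≤ 2 * b ^ n := by
    intro n
    calc |d n| ≤ |∫ x, x ^ n ∂μ| + |∫ x, x ^ n ∂μ'| := abs_sub _ _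
      _ ≤ b ^ n + b ^ n := add_le_add (moment_bound hb μ hμ n) (moment_bound hb μ' hμ' n)
      _ = 2 * b ^ n := by ring
  set E : ℕ × ℕ → ℝ := fun p =>
    if L + 1 ≤ p.1 + p.2 then
      2 * b ^ (p.1 + p.2) / ((p.1.factorial : ℝ) * (p.2.factorial : ℝ))
    else 0 with hE
  have hEnn : ∀ p, 0 ≤ E p := by
    intro p; rw [hE]; dsimp; split <;> positivity
  have hEle : ∀ p : ℕ × ℕ,
      E p ≤ (2 * b ^ p.1 / (p.1.factorial : ℝ)) * (b ^ p.2 / (p.2.factorial : ℝ)) := by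
    intro p; rw [hE]; dsimp; split
    · rw [pow_add]; apply le_of_eq; field_simp
    · positivity
  have hs1 : Summable (fun j : ℕ => 2 * b ^ j / (j.factorial : ℝ)) := by
    have := (Real.summable_pow_div_factorial b).mul_left 2
    apply this.congr; intro j; rw [mul_div_assoc]
  have hs2 := Real.summable_pow_div_factorial b
  have hEsum : Summable E := Summable.of_nonneg_of_le hEnn hEle
    (Summable.mul_of_nonneg hs1 hs2 (fun j => by positivity) (fun k => by positivity))
  have hEjsum : ∀ j, Summable (fun k => E (j, k)) := fun j =>
    Summable.of_nonneg_of_le (fun k => hEnn _) (fun k => hEle (j, k))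
      (hs2.mul_left (2 * b ^ j / (j.factorial : ℝ)))
  have hΔeq : ∀ j : ℕ, (∫ x, Real.exp (-x) * x ^ j / (j.factorial : ℝ) ∂μ)
      - (∫ x, Real.exp (-x) * x ^ j / (j.factorial : ℝ) ∂μ')
      = ∑' k : ℕ, (-1 : ℝ) ^ k * d (j + k) / ((j.factorial : ℝ) * (k.factorial : ℝ)) := by
    intro j
    rw [key_expansion hb μ hμ j, key_expansion hb μ' hμ' j,
      ← Summable.tsum_sub (summable_term hb μ hμ j) (summable_term hb μ' hμ' j)]
    apply tsum_congr; intro k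
    rw [hd]; dsimp; ring
  have htermabs : ∀ j k : ℕ,
      |(-1 : ℝ) ^ k * d (j + k) / ((j.factorial : ℝ) * (k.factorial : ℝ))| ≤ E (j, k) := by
    intro j k
    have hden : (0 : ℝ) < (j.factorial : ℝ) * (k.factorial : ℝ) := by positivity
    rw [abs_div, abs_mul, abs_pow, abs_neg, abs_one, one_pow, one_mul, abs_of_pos hden, hE]
    dsimp
    by_cases hn : L + 1 ≤ j + k
    · rw [if_pos hn]
      exact div_le_div_of_nonneg_right (hdabs (j + k)) hden.le
    · rw [if_neg hn, hd0 (j + k) (by omega)]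
      simp
  have hTsumm : ∀ j, Summable
      (fun k => |(-1 : ℝ) ^ k * d (j + k) / ((j.factorial : ℝ) * (k.factorial : ℝ))|) := by
    intro j
    exact Summable.of_nonneg_of_le (fun k => abs_nonneg _) (htermabs j) (hEjsum j)
  have habsle : ∀ j, |(∫ x, Real.exp (-x) * x ^ j / (j.factorial : ℝ) ∂μ)
      - ∫ x, Real.exp (-x) * x ^ j / (j.factorial : ℝ) ∂μ'| ≤ ∑' k, E (j, k) := by
    intro j
    rw [hΔeq j]
    have h1 : |∑' k : ℕ, (-1 : ℝ) ^ k * d (j + k) / ((j.factorial : ℝ) * (k.factorial : ℝ))|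
        ≤ ∑' k : ℕ, |(-1 : ℝ) ^ k * d (j + k) / ((j.factorial : ℝ) * (k.factorial : ℝ))| := by
      exact norm_tsum_le_tsum_norm
        (f := fun k : ℕ => (-1 : ℝ) ^ k * d (j + k) / ((j.factorial : ℝ) * (k.factorial : ℝ)))
        (hTsumm j)
    exact h1.trans (Summable.tsum_le_tsum (htermabs j) (hTsumm j) (hEjsum j))
  have hSjle : ∀ j, ∑' k, E (j, k) ≤ (2 * b ^ j / (j.factorial : ℝ)) * Real.exp b := by
    intro j
    have h2 : ∑' k : ℕ, (2 * b ^ j / (j.factorial : ℝ)) * (b ^ k / (k.factorial : ℝ))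
        = (2 * b ^ j / (j.factorial : ℝ)) * Real.exp b := by
      rw [tsum_mul_left, tsum_exp_pos]
    rw [← h2]
    exact Summable.tsum_le_tsum (fun k => hEle (j, k)) (hEjsum j)
      (hs2.mul_left (2 * b ^ j / (j.factorial : ℝ)))
  have hSsum : Summable (fun j => ∑' k, E (j, k)) := by
    apply Summable.of_nonneg_of_le (fun j => tsum_nonneg (fun k => hEnn _)) hSjle
    exact hs1.mul_right _
  have hΔsum : Summable (fun j => |(∫ x, Real.exp (-x) * x ^ j / (j.factorial : ℝ) ∂μ)
      - ∫ x, Real.exp (-x) * x ^ j / (j.factorial : ℝ) ∂μ'|) :=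
    Summable.of_nonneg_of_le (fun j => abs_nonneg _) habsle hSsum
  have step1 : ∑' j : ℕ, |(∫ x, Real.exp (-x) * x ^ j / (j.factorial : ℝ) ∂μ)
      - ∫ x, Real.exp (-x) * x ^ j / (j.factorial : ℝ) ∂μ'| ≤ ∑' j, ∑' k, E (j, k) :=
    Summable.tsum_le_tsum habsle hΔsum hSsum
  have step2 : ∑' (j) (k), E (j, k) = ∑' p : ℕ × ℕ, E p := (Summable.tsum_prod' hEsum hEjsum).symm
  set g : ℕ → ℝ := fun n =>
    if L + 1 ≤ n then 2 * (2 * b) ^ n / (n.factorial : ℝ) else 0 with hg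
  have step3 : ∑' p : ℕ × ℕ, E p = ∑' n, g n := by
    rw [tsum_prod_regroup E hEsum]
    apply tsum_congr; intro n
    have hsum_eq : ∀ i ∈ Finset.range (n + 1), E (i, n - i)
        = (if L + 1 ≤ n then
            2 * b ^ n * (1 / ((i.factorial : ℝ) * ((n - i).factorial : ℝ)))
          else 0) := by
      intro i hi
      have hin : i + (n - i) = n := by
        have := Finset.mem_range.mp hi; omega
      rw [hE]; dsimp; rw [hin]
      split
      · rw [mul_one_div, mul_div_assoc]
      · rfl
    rw [Finset.sum_congr rfl hsum_eq, hg]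
    by_cases hn : L + 1 ≤ n
    · simp only [if_pos hn]
      rw [← Finset.mul_sum, sum_inv_factorials, mul_pow]
      have h3 : (0 : ℝ) < (n.factorial : ℝ) := by positivity
      field_simp
    · simp [hn]
  have hgnn : ∀ n, 0 ≤ g n := by
    intro n; rw [hg]; dsimp; split <;> positivity
  have hGsum : Summable (fun n : ℕ => 2 * (2 * b) ^ n / (n.factorial : ℝ)) := by
    have := (Real.summable_pow_div_factorial (2 * b)).mul_left 2
    apply this.congr; intro n; rw [mul_div_assoc]
  have hgsum : Summable g :=
    Summable.of_nonneg_of_le hgnn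
      (fun n => by rw [hg]; dsimp; split
                   · exact le_rfl
                   · positivity) hGsum
  have htail : ∑' n, g n = ∑' m, g (m + (L + 1)) := by
    have h := Summable.sum_add_tsum_nat_add (f := g) (L + 1) hgsum
    have hzero : ∑ i ∈ Finset.range (L + 1), g i = 0 := by
      apply Finset.sum_eq_zero; intro i hi
      rw [hg]; dsimp
      rw [if_neg (by have := Finset.mem_range.mp hi; omega)]
    linarith [h]
  set q : ℝ := 2 * b / ((L : ℝ) + 1) with hq
  set c : ℝ := (2 * b) ^ (L + 1) / (((L + 1).factorial : ℝ)) with hc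
  have hq0 : 0 ≤ q := by positivity
  have hq1 : q < 1 := by
    rw [hq, div_lt_one (by positivity)]
    nlinarith [hexp2, hb, hL]
  have htb : ∀ m, g (m + (L + 1)) ≤ (2 * c) * q ^ m := by
    intro m
    rw [hg]; dsimp
    rw [if_pos (by omega)]
    have hkey := pow_div_factorial_tail (2 * b) (by positivity) (L + 1) (by omega) m
    rw [show m + (L + 1) = (L + 1) + m by ring]
    calc 2 * (2 * b) ^ ((L + 1) + m) / ((((L + 1) + m).factorial : ℝ))
        = 2 * ((2 * b) ^ ((L + 1) + m) / ((((L + 1) + m).factorial : ℝ))) := by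
          rw [mul_div_assoc]
      _ ≤ 2 * ((2 * b) ^ (L + 1) / (((L + 1).factorial : ℝ))
            * ((2 * b) / ((L + 1 : ℕ) : ℝ)) ^ m) := by
          apply mul_le_mul_of_nonneg_left hkey (by norm_num)
      _ = (2 * c) * q ^ m := by
          rw [hc, hq]; push_cast; ring
  have hgeo : Summable (fun m : ℕ => (2 * c) * q ^ m) :=
    (summable_geometric_of_lt_one hq0 hq1).mul_left _
  have htail2 : ∑' m, g (m + (L + 1)) ≤ (2 * c) * (1 - q)⁻¹ := by
    calc ∑' m, g (m + (L + 1)) ≤ ∑' m : ℕ, (2 * c) * q ^ m :=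
          Summable.tsum_le_tsum htb ((summable_nat_add_iff (L + 1)).mpr hgsum) hgeo
      _ = (2 * c) * ∑' m : ℕ, q ^ m := tsum_mul_left
      _ = (2 * c) * (1 - q)⁻¹ := by rw [tsum_geometric_of_lt_one hq0 hq1]
  calc (1 / 2) * ∑' j : ℕ,
        |(∫ x, Real.exp (-x) * x ^ j / (j.factorial : ℝ) ∂μ)
          - ∫ x, Real.exp (-x) * x ^ j / (j.factorial : ℝ) ∂μ'|
      ≤ (1 / 2) * ((2 * c) * (1 - q)⁻¹) := by
        apply mul_le_mul_of_nonneg_left _ (by norm_num)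
        calc ∑' j : ℕ, |(∫ x, Real.exp (-x) * x ^ j / (j.factorial : ℝ) ∂μ)
              - ∫ x, Real.exp (-x) * x ^ j / (j.factorial : ℝ) ∂μ'|
            ≤ ∑' (j) (k), E (j, k) := step1
          _ = ∑' p : ℕ × ℕ, E p := step2
          _ = ∑' n, g n := step3
          _ = ∑' m, g (m + (L + 1)) := htail
          _ ≤ (2 * c) * (1 - q)⁻¹ := htail2
    _ = c * (1 - q)⁻¹ := by ring
    _ ≤ (2 * Real.exp 1 * b / (L : ℝ)) ^ L := by
        rw [hc, hq]
        exact arith_final b hb L hL
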